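/- Let R be a commutative ring, p a prime ideal, A ∈ R^{m×n}, b ∈ R^{1×n}, and let (rᵢ | Lᵢ), i = 1,…,o, be elements with rᵢ ∈ R, Lᵢ ∈ R^{1×m}, satisfying rᵢ·b + Lᵢ·A = 0, such that r₁, …, r_o generate the ideal dom_R([b]_A). Then either all rᵢ ∈ p, in which case no row vector y over R_p satisfies y·(A/1) = b/1, or some rᵢ ∉ p, in which case y := −(1/rᵢ)·(Lᵢ/1) satisfies y·(A/1) = b/1 over R_p. -/

import Mathlib

open Matrix

theorem stmt_19 {R : Type*} [CommRing R] (p : Ideal R) [p.IsPrime]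
    {m n o : ℕ} (A : Matrix (Fin m) (Fin n) R) (b : Fin n → R)
    (r : Fin o → R) (L : Fin o → Fin m → R)
    (hsyz : ∀ i, r i • b + L i ᵥ* A = 0)
    (hgen : (Ideal.span (Set.range r) : Set R) =
      {s : R | ∃ x : Fin m → R, x ᵥ* A = s • b}) :
    ((∀ i, r i ∈ p) →
        ¬ ∃ y : Fin m → Localization.AtPrime p,
          y ᵥ* A.map (algebraMap R (Localization.AtPrime p)) =
            fun j => algebraMap R (Localization.AtPrime p) (b j)) ∧
      ∀ i, (hri : r i ∉ p) →
        (fun j => Localization.mk (-(L i j)) ⟨r i, hri⟩) ᵥ*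
            A.map (algebraMap R (Localization.AtPrime p)) =
          fun j => algebraMap R (Localization.AtPrime p) (b j) := by
  set S := Localization.AtPrime p
  set φ := algebraMap R S with hφ
  constructor
  · rintro hall ⟨y, hy⟩
    -- clear denominators of y
    obtain ⟨c, hc⟩ := IsLocalization.exist_integer_multiples_of_finite p.primeCompl y
    choose x hx using hc
    have key : ∀ j, φ ((x ᵥ* A) j) = φ (((c : R) • b) j) := by
      intro j
      have h2 := congrFun hy j
      simp only [vecMul, dotProduct, Matrix.map_apply, map_sum, _root_.map_mul, Pi.smul_apply,
        smul_eq_mul] at h2 ⊢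
      calc ∑ k, φ (x k) * φ (A k j) = ∑ k, ((c : R) • y k) * φ (A k j) := by
            exact Finset.sum_congr rfl fun k _ => by rw [← hx k]
        _ = φ c * ∑ k, y k * φ (A k j) := by
            simp [hφ, Finset.mul_sum, Submonoid.smul_def, Algebra.smul_def, mul_assoc]
            exact (Finset.mul_sum _ _ _).symm
        _ = φ c * φ (b j) := by rw [h2]
    choose t ht using fun j => IsLocalization.exists_of_eq (M := p.primeCompl) (key j)
    set T : p.primeCompl := ∏ j, t j with hT
    have hTmul : ∀ j, (T : R) * (x ᵥ* A) j = (T : R) * ((c : R) • b) j := by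
      intro j
      have : (T : R) = (∏ k ∈ Finset.univ.erase j, (t k : R)) * (t j : R) := by
        rw [hT, Submonoid.coe_finset_prod, ← Finset.prod_erase_mul _ _ (Finset.mem_univ j)]
      rw [this, mul_assoc, mul_assoc, ht j]
    have hmem : ((T : R) * (c : R)) ∈ {s : R | ∃ x : Fin m → R, x ᵥ* A = s • b} := by
      refine ⟨(T : R) • x, ?_⟩
      funext j
      have := hTmul j
      simp only [vecMul, dotProduct, Pi.smul_apply, smul_eq_mul] at this ⊢
      rw [Finset.mul_sum] at this
      calc ∑ k, (T : R) * x k * A k j = (T:R) * ∑ k, x k * A k j := by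
            simp [Finset.mul_sum, mul_assoc]
        _ = (T:R) * ((c:R) * b j) := by
            rw [← this]; simp [Finset.mul_sum, mul_assoc]
        _ = (T:R) * (c:R) * b j := by ring
    rw [← hgen] at hmem
    have hp : Ideal.span (Set.range r) ≤ p := by
      rw [Ideal.span_le]
      rintro _ ⟨i, rfl⟩
      exact hall i
    exact (T * c).2 (hp hmem)
  · intro i hri
    funext j
    have hru : IsUnit (φ (r i)) :=
      IsLocalization.map_units (M := p.primeCompl) S ⟨r i, hri⟩
    apply hru.mul_left_cancel
    have hs : (L i ᵥ* A) j = -(r i * b j) := by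
      have := congrFun (hsyz i) j
      simp only [Pi.add_apply, Pi.smul_apply, smul_eq_mul, Pi.zero_apply] at this
      linear_combination this
    have hcancel : ∀ a : R, φ (r i) * Localization.mk a ⟨r i, hri⟩ = φ a := by
      intro a
      rw [Localization.mk_eq_mk', mul_comm, IsLocalization.mk'_spec]
    calc φ (r i) * ((fun j => Localization.mk (-(L i j)) ⟨r i, hri⟩) ᵥ* A.map φ) j
        = ∑ k, (φ (r i) * Localization.mk (-(L i k)) ⟨r i, hri⟩) * φ (A k j) := by
          simp [vecMul, dotProduct, Finset.mul_sum, Matrix.map_apply, mul_assoc]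
      _ = ∑ k, φ (-(L i k)) * φ (A k j) := by
          simp only [hcancel]
      _ = φ (-((L i ᵥ* A) j)) := by
          simp [vecMul, dotProduct, map_sum, _root_.map_mul, map_neg, neg_mul, Finset.sum_neg_distrib]
          exact (Finset.sum_congr rfl fun k _ => neg_mul _ _).trans (Finset.sum_neg_distrib _)
      _ = φ (r i) * (fun j => φ (b j)) j := by
          rw [hs, neg_neg, _root_.map_mul]
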